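/- A function f ∈ H²_ω is H²_ω-inner if and only if for every integer k ≥ 1 there exist constants C_k and D_k such that D_k + |λ|² ≤ ‖f·(z^k + λ)‖² ≤ C_k + |λ|² for all λ ∈ ℂ. (In particular these two-sided bounds force ‖f‖ = 1.) -/

import Mathlib

noncomputable section
open Complex Filter

namespace WHS

/-- Membership in the weighted Hardy space: the coefficient sequence `a` satisfies
`∑ ω n * |a n|^2 < ∞`. -/
def memH (ω : ℕ → ℝ) (a : ℕ → ℂ) : Prop :=
  Summable fun n => ω n * ‖a n‖ ^ 2

/-- The squared norm `‖f‖²` in the weighted Hardy space. -/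
def wNorm2 (ω : ℕ → ℝ) (a : ℕ → ℂ) : ℝ := ∑' n, ω n * ‖a n‖ ^ 2

/-- The inner product `⟨f, g⟩ = ∑ ω n * a n * conj (b n)` (linear in the first argument). -/
def wInner (ω : ℕ → ℝ) (a b : ℕ → ℂ) : ℂ :=
  ∑' n, (ω n : ℂ) * a n * (starRingEnd ℂ) (b n)

/-- Coefficients of `z^m * f`. -/
def shift (m : ℕ) (a : ℕ → ℂ) : ℕ → ℂ := fun n => if m ≤ n then a (n - m) else 0

/-- Coefficients of `p * f` for a polynomial `p`. -/
def polyMul (p : Polynomial ℂ) (a : ℕ → ℂ) : ℕ → ℂ :=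
  fun n => ∑ j ∈ Finset.range (n + 1), p.coeff j * a (n - j)

/-- Coefficients of the product of power series with coefficients `b` and `a`. -/
def conv (b a : ℕ → ℂ) : ℕ → ℂ :=
  fun n => ∑ j ∈ Finset.range (n + 1), b j * a (n - j)

/-- `f` is an `H²_ω`-inner function: `f ∈ H²_ω`, `‖f‖ = 1` and `⟨z^m f, f⟩ = 0` for all `m ≥ 1`. -/
def IsInner (ω : ℕ → ℝ) (a : ℕ → ℂ) : Prop :=
  memH ω a ∧ wNorm2 ω a = 1 ∧ ∀ m : ℕ, 1 ≤ m → wInner ω (shift m a) a = 0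

end WHS

open WHS


lemma aux_summable_inner {ω : ℕ → ℝ} (hω : ∀ n, 0 < ω n) {a b : ℕ → ℂ}
    (ha : memH ω a) (hb : memH ω b) :
    Summable fun n => (ω n : ℂ) * a n * (starRingEnd ℂ) (b n) := by
  apply Summable.of_norm
  apply Summable.of_nonneg_of_le (fun n => norm_nonneg _)
    (f := fun n => (1/2) * (ω n * ‖a n‖^2 + ω n * ‖b n‖^2))
  · intro n
    have hnorm : ‖(ω n : ℂ) * a n * (starRingEnd ℂ) (b n)‖ = ω n * (‖a n‖ * ‖b n‖) := by
      rw [norm_mul, norm_mul, Complex.norm_real, RCLike.norm_conj, Real.norm_eq_abs,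
        _root_.abs_of_nonneg (hω n).le, mul_assoc]
    rw [hnorm]
    nlinarith [mul_nonneg (hω n).le (sq_nonneg (‖a n‖ - ‖b n‖))]
  · exact (ha.add hb).mul_left _

lemma aux_expand {ω : ℕ → ℝ} (hω : ∀ n, 0 < ω n) {a b : ℕ → ℂ}
    (ha : memH ω a) (hb : memH ω b) (lam : ℂ) :
    wNorm2 ω (fun n => a n + lam * b n)
      = wNorm2 ω a + ‖lam‖^2 * wNorm2 ω b
        + 2 * ((starRingEnd ℂ) lam * wInner ω a b).re := by
  have hc := aux_summable_inner hω ha hb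
  have hpt : ∀ n, ω n * ‖a n + lam * b n‖^2
      = ω n * ‖a n‖^2 + ‖lam‖^2 * (ω n * ‖b n‖^2)
        + 2 * ((starRingEnd ℂ) lam * ((ω n : ℂ) * a n * (starRingEnd ℂ) (b n))).re := by
    intro n
    have h1 : ∀ z : ℂ, ‖z‖^2 = Complex.normSq z := fun z => by
      rw [Complex.normSq_eq_norm_sq]
    simp only [h1]
    simp only [Complex.normSq_apply, Complex.add_re, Complex.add_im, Complex.mul_re,
      Complex.mul_im, Complex.conj_re, Complex.conj_im, Complex.ofReal_re, Complex.ofReal_im]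
    ring
  have s2 : Summable fun n => ‖lam‖^2 * (ω n * ‖b n‖^2) := hb.mul_left _
  have s3 : Summable fun n =>
      2 * ((starRingEnd ℂ) lam * ((ω n : ℂ) * a n * (starRingEnd ℂ) (b n))).re := by
    have := (hc.mul_left ((starRingEnd ℂ) lam)).map Complex.reCLM Complex.continuous_re
    exact this.mul_left 2
  unfold wNorm2 wInner
  calc (∑' n, ω n * ‖a n + lam * b n‖^2)
      = ∑' n, (ω n * ‖a n‖^2 + ‖lam‖^2 * (ω n * ‖b n‖^2)
        + 2 * ((starRingEnd ℂ) lam * ((ω n : ℂ) * a n * (starRingEnd ℂ) (b n))).re) :=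
        tsum_congr hpt
    _ = _ := by
        rw [Summable.tsum_add (ha.add s2) s3, Summable.tsum_add ha s2, tsum_mul_left, tsum_mul_left,
          ← Complex.re_tsum (hc.mul_left _), tsum_mul_left]

lemma aux_ratio {ω : ℕ → ℝ} (hpos : ∀ n, 0 < ω n)
    (hlim : Tendsto (fun n => ω (n+1)/ω n) atTop (nhds 1)) (k : ℕ) :
    Tendsto (fun m => ω (m+k)/ω m) atTop (nhds 1) := by
  induction k with
  | zero =>
    have : (fun m => ω (m+0)/ω m) = fun _ => 1 := funext fun m => by
      simp [div_self (hpos m).ne']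
    rw [this]; exact tendsto_const_nhds
  | succ k ih =>
    have h1 : Tendsto (fun m => ω (m+k+1)/ω (m+k)) atTop (nhds 1) :=
      hlim.comp (tendsto_add_atTop_nat k)
    have h2 := h1.mul ih
    rw [mul_one] at h2
    have heq : (fun m => ω (m+(k+1))/ω m)
        = fun m => (ω (m+k+1)/ω (m+k)) * (ω (m+k)/ω m) := funext fun m => by
      rw [div_mul_div_comm, mul_comm (ω (m+k+1)), mul_div_mul_left _ _ (hpos (m+k)).ne', Nat.add_succ, Nat.add_succ]
    rw [heq]; exact h2

lemma aux_memH_shift {ω : ℕ → ℝ} (hpos : ∀ n, 0 < ω n)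
    (hlim : Tendsto (fun n => ω (n+1)/ω n) atTop (nhds 1))
    {f : ℕ → ℂ} (hf : memH ω f) (k : ℕ) : memH ω (shift k f) := by
  unfold memH
  have hinj : Function.Injective (fun m : ℕ => m + k) := add_left_injective k
  have hzero : ∀ x ∉ Set.range (fun m : ℕ => m + k), ω x * ‖shift k f x‖^2 = 0 := by
    intro x hx
    have hxk : ¬ k ≤ x := by
      intro h
      exact hx ⟨x - k, by show x - k + k = x; omega⟩
    simp [shift, hxk]
  rw [← hinj.summable_iff hzero]
  have heq : ((fun n => ω n * ‖shift k f n‖^2) ∘ (fun m : ℕ => m + k))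
      = fun m => ω (m+k) * ‖f m‖^2 := funext fun m => by
    simp [shift, Nat.le_add_left]
  rw [heq]
  obtain ⟨M, hM⟩ := (aux_ratio hpos hlim k).bddAbove_range
  apply Summable.of_nonneg_of_le
    (fun m => mul_nonneg (hpos _).le (sq_nonneg _))
    (f := fun m => M * (ω m * ‖f m‖^2))
  · intro m
    have hr : ω (m+k) / ω m ≤ M := hM ⟨m, rfl⟩
    have : ω (m+k) ≤ M * ω m := by
      rw [div_le_iff₀ (hpos m)] at hr; linarith
    nlinarith [sq_nonneg ‖f m‖, hpos m]
  · exact hf.mul_left _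

lemma aux_quad {e C D : ℝ} (hD : ∀ t : ℝ, D ≤ t^2 * e) (hC : ∀ t : ℝ, t^2 * e ≤ C) :
    e = 0 := by
  rcases lt_trichotomy e 0 with he | he | he
  · exfalso
    have hD0 : D ≤ 0 := by have := hD 0; simpa using this
    have harg : 0 ≤ (D - 1)/e := by rw [div_nonneg_iff]; right; exact ⟨by linarith, he.le⟩
    have ht := hD (Real.sqrt ((D-1)/e))
    rw [Real.sq_sqrt harg, div_mul_cancel₀ _ he.ne] at ht
    linarith
  · exact he
  · exfalso
    have hC0 : 0 ≤ C := by have := hC 0; simpa using this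
    have harg : 0 ≤ (C+1)/e := div_nonneg (by linarith) he.le
    have ht := hC (Real.sqrt ((C+1)/e))
    rw [Real.sq_sqrt harg, div_mul_cancel₀ _ he.ne'] at ht
    linarith

lemma aux_lin {x C : ℝ} (h : ∀ t : ℝ, 2*(t*x) ≤ C) : x = 0 := by
  by_contra hx
  have h1 := h ((C+1)/(2*x))
  rw [show 2*((C+1)/(2*x)*x) = C+1 from by field_simp] at h1
  linarith

/-- `f ∈ H²_ω` is inner iff for every `k ≥ 1` there exist constants
`C_k`, `D_k` with `D_k + |λ|² ≤ ‖f·(z^k + λ)‖² ≤ C_k + |λ|²` for all `λ ∈ ℂ`. -/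
theorem stmt8 (ω : ℕ → ℝ) (hpos : ∀ n, 0 < ω n) (hω0 : ω 0 = 1)
    (hlim : Filter.Tendsto (fun n => ω (n + 1) / ω n) Filter.atTop (nhds 1))
    (f : ℕ → ℂ) (hf : WHS.memH ω f) :
    WHS.IsInner ω f ↔
      ∀ k : ℕ, 1 ≤ k → ∃ C D : ℝ, ∀ lam : ℂ,
        D + ‖lam‖ ^ 2 ≤ WHS.wNorm2 ω (fun n => WHS.shift k f n + lam * f n) ∧
        WHS.wNorm2 ω (fun n => WHS.shift k f n + lam * f n) ≤ C + ‖lam‖ ^ 2 := by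
  have hsh : ∀ k, memH ω (shift k f) := fun k => aux_memH_shift hpos hlim hf k
  constructor
  · rintro ⟨hmem, hN, hInn⟩ k hk
    refine ⟨wNorm2 ω (shift k f), wNorm2 ω (shift k f), fun lam => ?_⟩
    have hE := aux_expand hpos (hsh k) hf lam
    rw [hE, hN, hInn k hk]
    simp only [mul_one, mul_zero, Complex.zero_re]
    constructor <;> linarith
  · intro h
    have key : ∀ k : ℕ, 1 ≤ k → wNorm2 ω f = 1 ∧ wInner ω (shift k f) f = 0 := by
      intro k hk
      obtain ⟨C, D, hCD⟩ := h k hk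
      set A := wNorm2 ω (shift k f) with hA
      set c := wInner ω (shift k f) f with hc
      set N := wNorm2 ω f with hNdef
      have hCD' : ∀ lam : ℂ,
          D + ‖lam‖^2 ≤ A + ‖lam‖^2*N + 2*((starRingEnd ℂ) lam * c).re
          ∧ A + ‖lam‖^2*N + 2*((starRingEnd ℂ) lam * c).re ≤ C + ‖lam‖^2 := by
        intro lam
        have h0 := hCD lam
        rw [aux_expand hpos (hsh k) hf lam] at h0
        exact h0
      have hre : ∀ t : ℝ, D + t^2 ≤ A + t^2*N + 2*(t*c.re)
          ∧ A + t^2*N + 2*(t*c.re) ≤ C + t^2 := by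
        intro t
        have h0 := hCD' (t : ℂ)
        have hn : ‖(t:ℂ)‖^2 = t^2 := by
          rw [Complex.norm_real, Real.norm_eq_abs, _root_.sq_abs]
        have hr : ((starRingEnd ℂ) (t:ℂ) * c).re = t * c.re := by
          rw [Complex.conj_ofReal]
          simp [Complex.mul_re]
        rw [hn, hr] at h0
        exact h0
      have hN : N = 1 := by
        have hq1 : ∀ t : ℝ, D - A ≤ t^2 * (N - 1) := fun t => by
          have h1 := (hre t).1; have h2 := (hre (-t)).1; nlinarith
        have hq2 : ∀ t : ℝ, t^2 * (N - 1) ≤ C - A := fun t => by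
          have h1 := (hre t).2; have h2 := (hre (-t)).2; nlinarith
        have := aux_quad hq1 hq2
        linarith
      have hcre : c.re = 0 := by
        apply aux_lin (C := C - A)
        intro t
        have h2 := (hre t).2
        rw [hN, mul_one] at h2
        linarith
      have hcim : c.im = 0 := by
        apply aux_lin (C := C - A)
        intro t
        have h0 := (hCD' ((t:ℂ) * Complex.I)).2
        have hn : ‖(t:ℂ) * Complex.I‖^2 = t^2 := by
          rw [norm_mul, Complex.norm_I, mul_one, Complex.norm_real, Real.norm_eq_abs, _root_.sq_abs]
        have hr : ((starRingEnd ℂ) ((t:ℂ) * Complex.I) * c).re = t * c.im := by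
          simp [map_mul, Complex.conj_ofReal, Complex.conj_I, Complex.mul_re, Complex.mul_im]
        rw [hn, hr, hN, mul_one] at h0
        linarith
      refine ⟨hN, ?_⟩
      apply Complex.ext <;> simp [hcre, hcim]
    exact ⟨hf, (key 1 le_rfl).1, fun m hm => (key m hm).2⟩
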